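/- arXiv:1903.03403 — 2 statements merged into one kernel-verified Lean document; each statement's English description precedes it below -/
import Mathlib

section
/- If T is a bounded linear operator on a complex Hilbert space with T² = 0, then w(T) = (1/2)·√(‖TT* + T*T‖). -/
open Complex

variable {H : Type*} [NormedAddCommGroup H] [InnerProductSpace ℂ H] [CompleteSpace H]

/-- The numerical radius `w(T) = sup {|⟨Tx,x⟩| : ‖x‖ = 1}`. -/
noncomputable def numRadius (T : H →L[ℂ] H) : ℝ :=
  sSup {r : ℝ | ∃ x : H, ‖x‖ = 1 ∧ r = ‖(inner ℂ (T x) x : ℂ)‖}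

/-- The Crawford number `m(T) = inf {|⟨Tx,x⟩| : ‖x‖ = 1}`. -/
noncomputable def crawford (T : H →L[ℂ] H) : ℝ :=
  sInf {r : ℝ | ∃ x : H, ‖x‖ = 1 ∧ r = ‖(inner ℂ (T x) x : ℂ)‖}

/-- The real part `Re(T) = (T + T*)/2`. -/
noncomputable def reOp (T : H →L[ℂ] H) : H →L[ℂ] H := (2 : ℂ)⁻¹ • (T + star T)

/-- The imaginary part `Im(T) = (T - T*)/(2i)`. -/
noncomputable def imOp (T : H →L[ℂ] H) : H →L[ℂ] H := (2 * Complex.I)⁻¹ • (T - star T)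

lemma numSet_bddAbove (T : H →L[ℂ] H) :
    BddAbove {r : ℝ | ∃ x : H, ‖x‖ = 1 ∧ r = ‖(inner ℂ (T x) x : ℂ)‖} := by
  refine ⟨‖T‖, ?_⟩
  rintro r ⟨x, hx, rfl⟩
  calc ‖(inner ℂ (T x) x : ℂ)‖ ≤ ‖T x‖ * ‖x‖ := norm_inner_le_norm _ _
    _ ≤ ‖T‖ * ‖x‖ * ‖x‖ := by gcongr; exact T.le_opNorm x
    _ = ‖T‖ := by rw [hx]; ring

lemma numRadius_nonneg (T : H →L[ℂ] H) : 0 ≤ numRadius T :=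
  Real.sSup_nonneg (by rintro r ⟨x, hx, rfl⟩; exact norm_nonneg _)

lemma inner_le_numRadius (T : H →L[ℂ] H) (u : H) :
    ‖(inner ℂ (T u) u : ℂ)‖ ≤ numRadius T * ‖u‖ ^ 2 := by
  rcases eq_or_ne u 0 with rfl | hu
  · simp
  · set v : H := (‖u‖⁻¹ : ℂ) • u with hv
    have hv1 : ‖v‖ = 1 := norm_smul_inv_norm hu
    have hmem : ‖(inner ℂ (T v) v : ℂ)‖ ∈
        {r : ℝ | ∃ x : H, ‖x‖ = 1 ∧ r = ‖(inner ℂ (T x) x : ℂ)‖} := ⟨v, hv1, rfl⟩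
    have h1 : ‖(inner ℂ (T v) v : ℂ)‖ ≤ numRadius T := le_csSup (numSet_bddAbove T) hmem
    have h2 : (inner ℂ (T v) v : ℂ) = (‖u‖⁻¹ : ℂ) * (starRingEnd ℂ (‖u‖⁻¹ : ℂ)) * inner ℂ (T u) u := by
      simp only [hv, map_smul, inner_smul_left, inner_smul_right]
      ring
    have hnu : (0:ℝ) < ‖u‖ := norm_pos_iff.mpr hu
    have h3 : ‖(inner ℂ (T v) v : ℂ)‖ = ‖u‖⁻¹ * ‖u‖⁻¹ * ‖(inner ℂ (T u) u : ℂ)‖ := by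
      rw [h2]
      simp [norm_mul, abs_of_pos (inv_pos.mpr hnu)]
    rw [h3] at h1
    have := mul_le_mul_of_nonneg_right h1 (le_of_lt (mul_pos hnu hnu))
    calc ‖(inner ℂ (T u) u : ℂ)‖
        = ‖u‖⁻¹ * ‖u‖⁻¹ * ‖(inner ℂ (T u) u : ℂ)‖ * (‖u‖ * ‖u‖) := by
          field_simp
      _ ≤ numRadius T * (‖u‖ * ‖u‖) := this
      _ = numRadius T * ‖u‖ ^ 2 := by ring

lemma norm_le_two_numRadius (T : H →L[ℂ] H) : ‖T‖ ≤ 2 * numRadius T := by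
  have hw : 0 ≤ numRadius T := numRadius_nonneg T
  refine T.opNorm_le_bound (by positivity) fun y => ?_
  rcases eq_or_ne (T y) 0 with hTy | hTy
  · rw [hTy, norm_zero]; positivity
  · set c : ℝ := ‖y‖ / ‖T y‖ with hc
    have hc0 : 0 ≤ c := div_nonneg (norm_nonneg y) (norm_nonneg (T y))
    set x : H := ((c : ℂ)) • T y with hx
    have hTypos : (0:ℝ) < ‖T y‖ := norm_pos_iff.mpr hTy
    have hy : y ≠ 0 := by rintro rfl; simp at hTy
    have hypos : (0:ℝ) < ‖y‖ := norm_pos_iff.mpr hy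
    have hxnorm : ‖x‖ = ‖y‖ := by
      rw [hx, norm_smul, Complex.norm_real, Real.norm_of_nonneg hc0, hc]
      field_simp
    have hinner : ‖(inner ℂ (T y) x : ℂ)‖ = ‖T y‖ * ‖y‖ := by
      rw [hx, inner_smul_right, inner_self_eq_norm_sq_to_K, norm_mul, norm_pow]
      simp only [Complex.norm_real, RCLike.norm_ofReal, Real.norm_eq_abs,
        _root_.abs_of_nonneg hc0, _root_.abs_of_nonneg (norm_nonneg (T y)), hc]
      field_simp
      rw [abs_of_nonneg (by positivity)]; field_simp
    have hpol := inner_map_polarization (T : H →ₗ[ℂ] H) x y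
    simp only [ContinuousLinearMap.coe_coe] at hpol
    set w := numRadius T
    have b1 := inner_le_numRadius T (x + y)
    have b2 := inner_le_numRadius T (x - y)
    have b3 := inner_le_numRadius T (x + Complex.I • y)
    have b4 := inner_le_numRadius T (x - Complex.I • y)
    have hIy : ‖Complex.I • y‖ = ‖y‖ := by
      rw [norm_smul, Complex.norm_I, one_mul]
    have p1 := parallelogram_law_with_norm ℂ x y
    have p2 := parallelogram_law_with_norm ℂ x (Complex.I • y)
    rw [hIy] at p2
    rw [hxnorm] at p1 p2
    have key : ‖T y‖ * ‖y‖ ≤ 2 * w * ‖y‖ ^ 2 := by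
      rw [← hinner, hpol]
      set A := (inner ℂ (T (x + y)) (x + y) : ℂ)
      set B := (inner ℂ (T (x - y)) (x - y) : ℂ)
      set C := (inner ℂ (T (x + Complex.I • y)) (x + Complex.I • y) : ℂ)
      set D := (inner ℂ (T (x - Complex.I • y)) (x - Complex.I • y) : ℂ)
      have tri : ‖A - B + Complex.I * C - Complex.I * D‖ ≤ ‖A‖ + ‖B‖ + ‖C‖ + ‖D‖ := by
        have t1 : ‖A - B + Complex.I * C - Complex.I * D‖ ≤
            ‖A - B + Complex.I * C‖ + ‖Complex.I * D‖ := norm_sub_le _ _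
        have t2 : ‖A - B + Complex.I * C‖ ≤ ‖A - B‖ + ‖Complex.I * C‖ := norm_add_le _ _
        have t3 : ‖A - B‖ ≤ ‖A‖ + ‖B‖ := norm_sub_le _ _
        have e1 : ‖Complex.I * C‖ = ‖C‖ := by rw [norm_mul, Complex.norm_I, one_mul]
        have e2 : ‖Complex.I * D‖ = ‖D‖ := by rw [norm_mul, Complex.norm_I, one_mul]
        rw [e1] at t2
        rw [e2] at t1
        linarith
      calc ‖(A - B + Complex.I * C - Complex.I * D) / 4‖
          = ‖A - B + Complex.I * C - Complex.I * D‖ / 4 := by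
            rw [norm_div]; norm_num
        _ ≤ (‖A‖ + ‖B‖ + ‖C‖ + ‖D‖) / 4 := by linarith
        _ ≤ (w * ‖x + y‖ ^ 2 + w * ‖x - y‖ ^ 2 + w * ‖x + Complex.I • y‖ ^ 2
              + w * ‖x - Complex.I • y‖ ^ 2) / 4 := by gcongr <;> assumption
        _ = w * ((‖x + y‖ * ‖x + y‖ + ‖x - y‖ * ‖x - y‖) +
              (‖x + Complex.I • y‖ * ‖x + Complex.I • y‖ +
               ‖x - Complex.I • y‖ * ‖x - Complex.I • y‖)) / 4 := by ring
        _ = 2 * w * ‖y‖ ^ 2 := by linear_combination (w / 4) * p1 + (w / 4) * p2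
    have : ‖T y‖ * ‖y‖ ≤ (2 * w * ‖y‖) * ‖y‖ := by nlinarith
    exact le_of_mul_le_mul_right this hypos

lemma numRadius_le_half_norm (T : H →L[ℂ] H) (h : T ^ 2 = 0) :
    numRadius T ≤ ‖T‖ / 2 := by
  refine Real.sSup_le ?_ (by positivity)
  rintro r ⟨x, hx, rfl⟩
  set K : Submodule ℂ H := LinearMap.ker (T : H →ₗ[ℂ] H) with hK
  have hKclosed : IsClosed (K : Set H) := ContinuousLinearMap.isClosed_ker T
  haveI : CompleteSpace K := hKclosed.completeSpace_coe
  obtain ⟨y, hyK, z, hzK, hxyz⟩ := K.exists_add_mem_mem_orthogonal x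
  have hTy : T y = 0 := hyK
  have hTx : T x = T z := by rw [hxyz, map_add, hTy, zero_add]
  have hTzK : T z ∈ K := by
    have : T (T z) = (T ^ 2) z := by rw [pow_two]; rfl
    simp only [h, ContinuousLinearMap.zero_apply] at this
    exact this
  have hTzz : (inner ℂ (T z) z : ℂ) = 0 := hzK (T z) hTzK
  have hyz : (inner ℂ y z : ℂ) = 0 := Submodule.inner_right_of_mem_orthogonal hyK hzK
  have hpyth : ‖y‖ ^ 2 + ‖z‖ ^ 2 = 1 := by
    have := norm_add_sq (𝕜 := ℂ) y z
    rw [← hxyz, hx, hyz] at this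
    simp at this
    linarith
  have hsplit : (inner ℂ (T x) x : ℂ) = inner ℂ (T z) y := by
    rw [hTx, hxyz, inner_add_right, hTzz, add_zero]
  rw [hsplit]
  calc ‖(inner ℂ (T z) y : ℂ)‖ ≤ ‖T z‖ * ‖y‖ := norm_inner_le_norm _ _
    _ ≤ ‖T‖ * ‖z‖ * ‖y‖ := by gcongr; exact T.le_opNorm z
    _ ≤ ‖T‖ * ((‖y‖ ^ 2 + ‖z‖ ^ 2) / 2) := by nlinarith [norm_nonneg T, sq_nonneg (‖y‖ - ‖z‖)]
    _ = ‖T‖ / 2 := by rw [hpyth]; ring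

lemma aux_pow_mul_pow_eq_zero {R : Type*} [Ring R] {a b : R} (hab : a * b = 0) (m k : ℕ) :
    a ^ (m + 1) * b ^ (k + 1) = 0 := by
  rw [pow_succ, pow_succ', mul_assoc, ← mul_assoc a b, hab, zero_mul, mul_zero]

lemma norm_sum_eq_sq (T : H →L[ℂ] H) (h : T ^ 2 = 0) :
    ‖T * star T + star T * T‖ = ‖T‖ ^ 2 := by
  set A : H →L[ℂ] H := star T * T with hA
  set B : H →L[ℂ] H := T * star T with hB
  have hT2 : T * T = 0 := by rw [← pow_two]; exact h
  have hsT2 : star T * star T = 0 := by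
    rw [← star_mul, hT2, star_zero]
  have hAB : A * B = 0 := by
    rw [hA, hB, show star T * T * (T * star T) = star T * (T * T * star T) by
      simp [mul_assoc], hT2, zero_mul, mul_zero]
  have hBA : B * A = 0 := by
    rw [hB, hA, show T * star T * (star T * T) = T * (star T * star T * T) by
      simp [mul_assoc], hsT2, zero_mul, mul_zero]
  have hAsa : IsSelfAdjoint A := IsSelfAdjoint.star_mul_self T
  have hBsa : IsSelfAdjoint B := IsSelfAdjoint.mul_star_self T
  have hSsa : IsSelfAdjoint (B + A) := hBsa.add hAsa
  have hnA : ‖A‖ = ‖T‖ ^ 2 := by rw [hA, CStarRing.norm_star_mul_self, pow_two]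
  have hnB : ‖B‖ = ‖T‖ ^ 2 := by rw [hB, CStarRing.norm_self_mul_star, pow_two]
  have key : ∀ n : ℕ, (B + A) ^ (2 ^ n) = A ^ (2 ^ n) + B ^ (2 ^ n) := by
    intro n
    induction n with
    | zero => simp [add_comm]
    | succ n ih =>
      obtain ⟨m, hm⟩ : ∃ m, 2 ^ n = m + 1 :=
        ⟨2 ^ n - 1, (Nat.succ_pred_eq_of_pos (Nat.two_pow_pos n)).symm⟩
      have c1 : A ^ (m + 1) * B ^ (m + 1) = 0 := aux_pow_mul_pow_eq_zero hAB m m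
      have c2 : B ^ (m + 1) * A ^ (m + 1) = 0 := aux_pow_mul_pow_eq_zero hBA m m
      rw [pow_succ 2 n, pow_mul, ih, pow_mul, pow_mul, hm, sq, sq, sq,
        add_mul, mul_add, mul_add, c1, c2]
      abel
  have bound : ∀ n : ℕ, ‖B + A‖ ^ (2 ^ n) ≤ 2 * (‖T‖ ^ 2) ^ (2 ^ n) := by
    intro n
    have h1 : ‖(B + A) ^ (2 ^ n)‖ = ‖B + A‖ ^ (2 ^ n) := by
      rw [← coe_nnnorm ((B + A) ^ 2 ^ n), hSsa.nnnorm_pow_two_pow n,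
        NNReal.coe_pow, coe_nnnorm]
    have hpos : 0 < 2 ^ n := Nat.two_pow_pos n
    calc ‖B + A‖ ^ (2 ^ n) = ‖(B + A) ^ (2 ^ n)‖ := h1.symm
      _ = ‖A ^ (2 ^ n) + B ^ (2 ^ n)‖ := by rw [key n]
      _ ≤ ‖A ^ (2 ^ n)‖ + ‖B ^ (2 ^ n)‖ := norm_add_le _ _
      _ ≤ ‖A‖ ^ (2 ^ n) + ‖B‖ ^ (2 ^ n) := by
          gcongr <;> exact norm_pow_le' _ hpos
      _ = 2 * (‖T‖ ^ 2) ^ (2 ^ n) := by rw [hnA, hnB]; ring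
  have hle : ‖B + A‖ ≤ ‖T‖ ^ 2 := by
    by_contra hlt
    push_neg at hlt
    rcases eq_or_ne ‖T‖ 0 with h0 | h0
    · have hT0 : T = 0 := norm_eq_zero.mp h0
      rw [hT0] at hA hB
      simp only [hA, hB, star_zero, mul_zero, zero_mul, add_zero, norm_zero, h0] at hlt
      simp at hlt
    · have hT2pos : (0:ℝ) < ‖T‖ ^ 2 := by positivity
      set r : ℝ := ‖B + A‖ / ‖T‖ ^ 2 with hr
      have hr1 : 1 < r := (one_lt_div hT2pos).mpr hlt
      obtain ⟨n, hn⟩ := pow_unbounded_of_one_lt (2 : ℝ) hr1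
      have h2n : r ^ n ≤ r ^ (2 ^ n) :=
        pow_le_pow_right₀ hr1.le (Nat.lt_two_pow_self (n := n)).le
      have hrb : r ^ (2 ^ n) ≤ 2 := by
        rw [hr, div_pow]
        rw [div_le_iff₀ (by positivity)]
        exact (bound n).trans_eq (by ring)
      linarith
  have hge : ‖T‖ ^ 2 ≤ ‖B + A‖ := by
    have hTle : ‖T‖ ≤ Real.sqrt ‖B + A‖ := by
      refine T.opNorm_le_bound (Real.sqrt_nonneg _) fun u => ?_
      have e1 : (inner ℂ (A u) u : ℂ) = (‖T u‖ : ℂ) ^ 2 := by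
        rw [hA, ContinuousLinearMap.mul_apply, ContinuousLinearMap.star_eq_adjoint,
          ContinuousLinearMap.adjoint_inner_left, inner_self_eq_norm_sq_to_K]
        rfl
      have e2 : (inner ℂ (B u) u : ℂ) = (‖star T u‖ : ℂ) ^ 2 := by
        rw [hB, ContinuousLinearMap.mul_apply, ContinuousLinearMap.star_eq_adjoint]
        rw [← ContinuousLinearMap.adjoint_inner_right T _ u, inner_self_eq_norm_sq_to_K]
        rfl
      have e3 : (inner ℂ ((B + A) u) u : ℂ).re = ‖star T u‖ ^ 2 + ‖T u‖ ^ 2 := by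
        rw [ContinuousLinearMap.add_apply, inner_add_left, e1, e2, Complex.add_re,
          ← Complex.ofReal_pow, ← Complex.ofReal_pow, Complex.ofReal_re, Complex.ofReal_re]
      have e4 : (inner ℂ ((B + A) u) u : ℂ).re ≤ ‖B + A‖ * ‖u‖ ^ 2 := by
        calc (inner ℂ ((B + A) u) u : ℂ).re ≤ ‖(inner ℂ ((B + A) u) u : ℂ)‖ := Complex.re_le_norm _
          _ ≤ ‖(B + A) u‖ * ‖u‖ := norm_inner_le_norm _ _
          _ ≤ ‖B + A‖ * ‖u‖ * ‖u‖ := by gcongr; exact (B + A).le_opNorm u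
          _ = ‖B + A‖ * ‖u‖ ^ 2 := by ring
      have e5 : ‖T u‖ ^ 2 ≤ ‖B + A‖ * ‖u‖ ^ 2 := by
        have := sq_nonneg ‖star T u‖
        rw [e3] at e4
        linarith
      calc ‖T u‖ = Real.sqrt (‖T u‖ ^ 2) := (Real.sqrt_sq (norm_nonneg _)).symm
        _ ≤ Real.sqrt (‖B + A‖ * ‖u‖ ^ 2) := Real.sqrt_le_sqrt e5
        _ = Real.sqrt ‖B + A‖ * ‖u‖ := by
            rw [Real.sqrt_mul (norm_nonneg _), Real.sqrt_sq (norm_nonneg _)]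
    calc ‖T‖ ^ 2 ≤ Real.sqrt ‖B + A‖ ^ 2 := by
          exact pow_le_pow_left₀ (norm_nonneg T) hTle 2
      _ = ‖B + A‖ := Real.sq_sqrt (norm_nonneg _)
  linarith

theorem stmt2 (T : H →L[ℂ] H) (h : T ^ 2 = 0) :
    numRadius T = (1/2) * Real.sqrt ‖T * star T + star T * T‖ := by
  have h1 := numRadius_le_half_norm T h
  have h2 := norm_le_two_numRadius T
  have h3 : numRadius T = ‖T‖ / 2 := by linarith
  rw [h3, norm_sum_eq_sq T h, Real.sqrt_sq (norm_nonneg T)]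
  ring
end

section
/- For a bounded linear operator T on a complex Hilbert space, w(T) ≥ √(‖Re(T)‖² + m(Im(T))²), where m(S) = inf{|⟨Sx,x⟩| : ‖x‖ = 1} is the Crawford number, Re(T) = (T+T*)/2 and Im(T) = (T−T*)/(2i). -/
open Complex

variable {H : Type*} [NormedAddCommGroup H] [InnerProductSpace ℂ H] [CompleteSpace H]

/-- For a self-adjoint operator, a uniform bound on `|⟨Ax,x⟩|` over unit vectors bounds the
operator norm. -/
lemma selfadjoint_norm_le {A : H →L[ℂ] H} (hA : IsSelfAdjoint A) {M : ℝ} (hM : 0 ≤ M)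
    (h : ∀ x : H, ‖x‖ = 1 → ‖(inner ℂ (A x) x : ℂ)‖ ≤ M) : ‖A‖ ≤ M := by
  have hsym := hA.isSymmetric
  -- scaled bound
  have hb : ∀ z : H, ‖(inner ℂ (A z) z : ℂ)‖ ≤ M * ‖z‖ ^ 2 := by
    intro z
    rcases eq_or_ne z 0 with rfl | hz
    · simp [hM]
    · have hnz : (0:ℝ) < ‖z‖ := norm_pos_iff.mpr hz
      set c : ℂ := ((‖z‖⁻¹ : ℝ) : ℂ) with hc
      have hu : ‖c • z‖ = 1 := by
        rw [norm_smul]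
        simp [hc, hnz.ne', _root_.abs_of_nonneg (inv_nonneg.mpr hnz.le)]
      have := h (c • z) hu
      have hAc : A (c • z) = c • A z := by rw [map_smul]
      rw [hAc, inner_smul_left, inner_smul_right] at this
      have hcc : (starRingEnd ℂ) c = c := by simp [hc]
      rw [hcc] at this
      have hnorm : ‖c * (c * (inner ℂ (A z) z : ℂ))‖ = ‖z‖⁻¹ * (‖z‖⁻¹ * ‖(inner ℂ (A z) z : ℂ)‖) := by
        simp [norm_mul, hc, _root_.abs_of_nonneg (inv_nonneg.mpr hnz.le)]
      rw [hnorm] at this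
      have h2 : ‖(inner ℂ (A z) z : ℂ)‖ ≤ M * (‖z‖ * ‖z‖) := by
        have := mul_le_mul_of_nonneg_left this (mul_pos hnz hnz).le
        calc ‖(inner ℂ (A z) z : ℂ)‖
            = ‖z‖ * ‖z‖ * (‖z‖⁻¹ * (‖z‖⁻¹ * ‖(inner ℂ (A z) z : ℂ)‖)) := by
              field_simp
          _ ≤ ‖z‖ * ‖z‖ * M := this
          _ = M * (‖z‖ * ‖z‖) := by ring
      calc ‖(inner ℂ (A z) z : ℂ)‖ ≤ M * (‖z‖ * ‖z‖) := h2
        _ = M * ‖z‖ ^ 2 := by ring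
  -- real part bound via polarization
  have hre : ∀ x y : H, (inner ℂ (A x) y : ℂ).re ≤ (M * (‖x‖ ^ 2 + ‖y‖ ^ 2)) / 2 := by
    intro x y
    have e1 : (inner ℂ (A (x + y)) (x + y) : ℂ) - (inner ℂ (A (x - y)) (x - y) : ℂ)
        = 2 * ((inner ℂ (A x) y : ℂ) + (inner ℂ (A y) x : ℂ)) := by
      simp only [map_add, map_sub, inner_add_add_self, inner_sub_sub_self,
        inner_add_left, inner_add_right, inner_sub_left, inner_sub_right]
      ring
    have e2 : (inner ℂ (A y) x : ℂ) = (starRingEnd ℂ) (inner ℂ (A x) y : ℂ) := by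
      rw [hsym.apply_clm x y, inner_conj_symm]
    have hre4 : 4 * (inner ℂ (A x) y : ℂ).re
        = ((inner ℂ (A (x + y)) (x + y) : ℂ) - (inner ℂ (A (x - y)) (x - y) : ℂ)).re := by
      rw [e1, e2, Complex.add_conj]
      simp [Complex.mul_re]
      ring
    have hb1 := hb (x + y)
    have hb2 := hb (x - y)
    have habs1 : ((inner ℂ (A (x + y)) (x + y) : ℂ)).re ≤ M * ‖x + y‖ ^ 2 :=
      le_trans (Complex.re_le_norm _) hb1
    have habs2 : -(((inner ℂ (A (x - y)) (x - y) : ℂ)).re) ≤ M * ‖x - y‖ ^ 2 := by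
      have h1 := Complex.abs_re_le_norm ((inner ℂ (A (x - y)) (x - y) : ℂ))
      have h2 := neg_le_abs (((inner ℂ (A (x - y)) (x - y) : ℂ)).re)
      linarith
    have hpar : ‖x + y‖ * ‖x + y‖ + ‖x - y‖ * ‖x - y‖ = 2 * (‖x‖ * ‖x‖ + ‖y‖ * ‖y‖) :=
      by have := parallelogram_law_with_norm ℂ x y; simp only [pow_two] at this; exact this
    have : 4 * (inner ℂ (A x) y : ℂ).re ≤ M * ‖x + y‖ ^ 2 + M * ‖x - y‖ ^ 2 := by
      rw [hre4, Complex.sub_re]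
      linarith
    have hmp : M * (‖x + y‖ * ‖x + y‖ + ‖x - y‖ * ‖x - y‖)
        = M * (2 * (‖x‖ * ‖x‖ + ‖y‖ * ‖y‖)) := by rw [hpar]
    simp only [pow_two] at this ⊢
    linarith
  -- conclude
  refine ContinuousLinearMap.opNorm_le_bound A hM ?_
  intro x
  rcases eq_or_ne (A x) 0 with hAx | hAx
  · simp [hAx, mul_nonneg hM (norm_nonneg x)]
  · have hAxn : (0:ℝ) < ‖A x‖ := norm_pos_iff.mpr hAx
    set y : H := ((‖x‖ / ‖A x‖ : ℝ) : ℂ) • A x with hy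
    have hyn : ‖y‖ = ‖x‖ := by
      rw [hy, norm_smul]
      have hnc : ‖((‖x‖ / ‖A x‖ : ℝ) : ℂ)‖ = ‖x‖ / ‖A x‖ := by
        rw [Complex.norm_real, Real.norm_eq_abs, _root_.abs_of_nonneg (div_nonneg (norm_nonneg x) hAxn.le)]
      rw [hnc, div_mul_cancel₀ _ hAxn.ne']
    have hiy : (inner ℂ (A x) y : ℂ).re = (‖x‖ / ‖A x‖) * ‖A x‖ ^ 2 := by
      rw [hy, inner_smul_right]
      simp only [Complex.mul_re, Complex.ofReal_re, Complex.ofReal_im, zero_mul, sub_zero]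
      rw [show ((inner ℂ (A x) (A x) : ℂ)).re = ‖A x‖ ^ 2 by
        rw [inner_self_eq_norm_sq_to_K (𝕜 := ℂ)]; norm_cast]
    have h1 := hre x y
    rw [hiy, hyn] at h1
    have : ‖x‖ * ‖A x‖ ≤ M * ‖x‖ ^ 2 := by
      have hxAx : (‖x‖ / ‖A x‖) * ‖A x‖ ^ 2 = ‖x‖ * ‖A x‖ := by
        field_simp
      rw [hxAx] at h1
      linarith
    rcases eq_or_ne x 0 with rfl | hx
    · exact absurd (map_zero A) hAx
    · have hxn : (0:ℝ) < ‖x‖ := norm_pos_iff.mpr hx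
      nlinarith [this]

lemma star_inner_eq (T : H →L[ℂ] H) (x : H) :
    (inner ℂ ((star T) x) x : ℂ) = (starRingEnd ℂ) (inner ℂ (T x) x : ℂ) := by
  rw [ContinuousLinearMap.star_eq_adjoint, ContinuousLinearMap.adjoint_inner_left]
  exact (inner_conj_symm _ _).symm

lemma reOp_inner (T : H →L[ℂ] H) (x : H) :
    (inner ℂ (reOp T x) x : ℂ) = (((inner ℂ (T x) x : ℂ)).re : ℂ) := by
  simp only [reOp, ContinuousLinearMap.smul_apply, ContinuousLinearMap.add_apply,
    inner_smul_left, inner_add_left, star_inner_eq]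
  have hc : (starRingEnd ℂ) ((2:ℂ)⁻¹) = (2:ℂ)⁻¹ := by
    rw [map_inv₀, Complex.conj_ofNat]
  rw [hc, Complex.add_conj]
  push_cast
  ring

lemma imOp_inner (T : H →L[ℂ] H) (x : H) :
    (inner ℂ (imOp T x) x : ℂ) = -((((inner ℂ (T x) x : ℂ)).im : ℝ) : ℂ) := by
  simp only [imOp, ContinuousLinearMap.smul_apply, ContinuousLinearMap.sub_apply,
    inner_smul_left, inner_sub_left, star_inner_eq]
  have hc : (starRingEnd ℂ) ((2 * Complex.I)⁻¹) = -((2 * Complex.I)⁻¹) := by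
    rw [map_inv₀, map_mul, Complex.conj_I, Complex.conj_ofNat]
    ring
  rw [hc, Complex.sub_conj]
  have hI : (2 * Complex.I) ≠ 0 := by simp [Complex.I_ne_zero]
  field_simp
  ring_nf
  push_cast
  ring

lemma imOp_inner_norm (T : H →L[ℂ] H) (x : H) :
    ‖(inner ℂ (imOp T x) x : ℂ)‖ = |((inner ℂ (T x) x : ℂ)).im| := by
  rw [imOp_inner, norm_neg, Complex.norm_real, Real.norm_eq_abs]

theorem stmt10 (T : H →L[ℂ] H) :
    numRadius T ≥ Real.sqrt (‖reOp T‖ ^ 2 + crawford (imOp T) ^ 2) := by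
  rcases subsingleton_or_nontrivial H with hsub | hnt
  · have hre0 : reOp T = 0 := by ext x; exact Subsingleton.elim _ _
    have hempty : ∀ S : H →L[ℂ] H,
        {r : ℝ | ∃ x : H, ‖x‖ = 1 ∧ r = ‖(inner ℂ (S x) x : ℂ)‖} = ∅ := by
      intro S
      ext r
      simp only [Set.mem_setOf_eq, Set.mem_empty_iff_false, iff_false, not_exists]
      rintro x ⟨hx, -⟩
      rw [Subsingleton.elim x 0, norm_zero] at hx
      norm_num at hx
    rw [ge_iff_le, numRadius, crawford, hempty, hempty, hre0]
    simp [Real.sSup_empty, Real.sInf_empty]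
  · obtain ⟨e, he0⟩ := exists_ne (0 : H)
    have hen : (0:ℝ) < ‖e‖ := norm_pos_iff.mpr he0
    set u : H := ((‖e‖⁻¹ : ℝ) : ℂ) • e with hu_def
    have hu : ‖u‖ = 1 := by
      rw [hu_def, norm_smul, Complex.norm_real, Real.norm_eq_abs,
        _root_.abs_of_nonneg (inv_nonneg.mpr hen.le), inv_mul_cancel₀ hen.ne']
    set w := numRadius T with hw
    set m := crawford (imOp T) with hm
    have hbdd : BddAbove {r : ℝ | ∃ x : H, ‖x‖ = 1 ∧ r = ‖(inner ℂ (T x) x : ℂ)‖} := by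
      refine ⟨‖T‖, ?_⟩
      rintro r ⟨x, hx, rfl⟩
      calc ‖(inner ℂ (T x) x : ℂ)‖ ≤ ‖T x‖ * ‖x‖ := norm_inner_le_norm _ _
        _ ≤ ‖T‖ * ‖x‖ * ‖x‖ := by
            have := T.le_opNorm x
            nlinarith [norm_nonneg x]
        _ = ‖T‖ := by rw [hx]; ring
    have hwle : ∀ x : H, ‖x‖ = 1 → ‖(inner ℂ (T x) x : ℂ)‖ ≤ w :=
      fun x hx => le_csSup hbdd ⟨x, hx, rfl⟩
    have hm0 : 0 ≤ m := by
      apply Real.sInf_nonneg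
      rintro r ⟨x, hx, rfl⟩
      exact norm_nonneg _
    have hmle : ∀ x : H, ‖x‖ = 1 → m ≤ ‖(inner ℂ (imOp T x) x : ℂ)‖ := by
      intro x hx
      apply csInf_le
      · exact ⟨0, by rintro r ⟨y, hy, rfl⟩; exact norm_nonneg _⟩
      · exact ⟨x, hx, rfl⟩
    have hsq : ∀ x : H, ‖(inner ℂ (T x) x : ℂ)‖ ^ 2
        = ((inner ℂ (T x) x : ℂ)).re ^ 2 + ((inner ℂ (T x) x : ℂ)).im ^ 2 := by
      intro x
      rw [Complex.sq_norm, Complex.normSq_apply]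
      ring
    have key : ∀ x : H, ‖x‖ = 1 →
        ((inner ℂ (T x) x : ℂ)).re ^ 2 + m ^ 2 ≤ w ^ 2 := by
      intro x hx
      have h1 := hwle x hx
      have h2 := hmle x hx
      rw [imOp_inner_norm] at h2
      have h3 := hsq x
      nlinarith [norm_nonneg ((inner ℂ (T x) x : ℂ)), _root_.sq_abs ((inner ℂ (T x) x : ℂ)).im, hm0]
    have hw0 : 0 ≤ w := le_trans (norm_nonneg _) (hwle u hu)
    have hm2w2 : m ^ 2 ≤ w ^ 2 := by
      have := key u hu
      nlinarith [sq_nonneg ((inner ℂ (T u) u : ℂ)).re]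
    set M := Real.sqrt (w ^ 2 - m ^ 2) with hM
    have hM0 : 0 ≤ M := Real.sqrt_nonneg _
    have hMsq : M ^ 2 = w ^ 2 - m ^ 2 := Real.sq_sqrt (by linarith)
    have hrebound : ∀ x : H, ‖x‖ = 1 → ‖(inner ℂ (reOp T x) x : ℂ)‖ ≤ M := by
      intro x hx
      rw [reOp_inner, Complex.norm_real, Real.norm_eq_abs]
      apply Real.abs_le_sqrt
      have := key x hx
      linarith
    have hsa : IsSelfAdjoint (reOp T) := by
      have : star (reOp T) = reOp T := by
        unfold reOp
        rw [star_smul, star_add, star_star]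
        have hc : star ((2:ℂ)⁻¹) = (2:ℂ)⁻¹ := by
          rw [Complex.star_def, map_inv₀, Complex.conj_ofNat]
        rw [hc, add_comm]
      exact this
    have hnorm : ‖reOp T‖ ≤ M := selfadjoint_norm_le hsa hM0 hrebound
    have hfinal : ‖reOp T‖ ^ 2 + m ^ 2 ≤ w ^ 2 := by
      nlinarith [norm_nonneg (reOp T)]
    calc Real.sqrt (‖reOp T‖ ^ 2 + m ^ 2) ≤ Real.sqrt (w ^ 2) := Real.sqrt_le_sqrt hfinal
      _ = w := Real.sqrt_sq hw0
end
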